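/- arXiv:2009.09868 — 2 statements merged into one kernel-verified Lean document; each statement's English description precedes it below -/
import Mathlib

section
/- Let $\gamma > 0$ and $\tau \geq 1$. For every non-negative, non-decreasing function $h : (0,\infty) \to [0,\infty)$, one has $\int_0^\infty \big( \rho^{-\gamma} h(\rho) \big)^\tau \frac{d\rho}{\rho} \leq 2^{(2\gamma+1)\tau} \Big( \int_0^\infty \rho^{-\gamma} h(\rho) \frac{d\rho}{\rho} \Big)^\tau$. -/
open MeasureTheory Set

theorem stmt_0 (γ τ : ℝ) (hγ : 0 < γ) (hτ : 1 ≤ τ)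
    (h : ℝ → ℝ) (hpos : ∀ ρ ∈ Ioi (0:ℝ), 0 ≤ h ρ)
    (hmono : MonotoneOn h (Ioi (0:ℝ))) :
    ∫⁻ ρ in Ioi (0:ℝ), ENNReal.ofReal ((ρ ^ (-γ) * h ρ) ^ τ / ρ)
      ≤ ENNReal.ofReal (2 ^ ((2*γ+1)*τ)) *
        (∫⁻ ρ in Ioi (0:ℝ), ENNReal.ofReal (ρ ^ (-γ) * h ρ / ρ)) ^ τ := by
  set I := ∫⁻ ρ in Ioi (0:ℝ), ENNReal.ofReal (ρ ^ (-γ) * h ρ / ρ) with hIdef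
  set D : ℝ := 1 - 2 ^ (-γ) with hDdef
  set C : ℝ := γ / D with hCdef
  have hlog2lb : (0.6931471803 : ℝ) < Real.log 2 := Real.log_two_gt_d9
  have hlog2ub : Real.log 2 < 0.6931471808 := Real.log_two_lt_d9
  have h2γlt1 : (2:ℝ) ^ (-γ) < 1 :=
    Real.rpow_lt_one_of_one_lt_of_neg one_lt_two (neg_neg_of_pos hγ)
  have hD : 0 < D := by simp only [hDdef]; linarith
  -- 1 - 2^(-γ) ≤ γ * log 2
  have hDle : D ≤ γ * Real.log 2 := by
    have := Real.add_one_le_exp (-(γ * Real.log 2))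
    have h2 : (2:ℝ) ^ (-γ) = Real.exp (-(γ * Real.log 2)) := by
      rw [Real.rpow_def_of_pos two_pos]; ring_nf
    simp only [hDdef]; rw [h2]; linarith
  have hC1 : 1 ≤ C := by
    rw [hCdef, le_div_iff₀ hD]
    nlinarith
  have hC0 : 0 ≤ C := le_trans zero_le_one hC1
  -- 2^γ ≥ 1 + γ log 2
  have h2γge : γ * Real.log 2 + 1 ≤ (2:ℝ) ^ γ := by
    have := Real.add_one_le_exp (γ * Real.log 2)
    have h2 : (2:ℝ) ^ γ = Real.exp (γ * Real.log 2) := by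
      rw [Real.rpow_def_of_pos two_pos]; ring_nf
    rw [h2]; linarith
  have hCbound : C ≤ (2:ℝ) ^ (2*γ+1) := by
    rw [hCdef, div_le_iff₀ hD]
    have hsplit : (2:ℝ) ^ (2*γ+1) = 2 ^ (γ+1) * 2 ^ γ := by
      rw [← Real.rpow_add two_pos]; ring_nf
    have hsplit2 : (2:ℝ) ^ (2*γ+1) * 2 ^ (-γ) = 2 ^ (γ+1) := by
      rw [← Real.rpow_add two_pos]; ring_nf
    have h21 : (2:ℝ) ≤ 2 ^ (γ+1) := by
      calc (2:ℝ) = 2 ^ (1:ℝ) := (Real.rpow_one 2).symm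
        _ ≤ 2 ^ (γ+1) := Real.rpow_le_rpow_of_exponent_le one_le_two (by linarith)
    have h2γ1pos : (0:ℝ) < 2 ^ (γ+1) := Real.rpow_pos_of_pos two_pos _
    simp only [hDdef]
    nlinarith
  -- key pointwise bound
  have key : ∀ ρ ∈ Ioi (0:ℝ), ENNReal.ofReal (ρ ^ (-γ) * h ρ) ≤ ENNReal.ofReal C * I := by
    intro ρ hρ
    have hρ0 : (0:ℝ) < ρ := hρ
    have hsub : Ioc ρ (2*ρ) ⊆ Ioi (0:ℝ) := fun x hx => lt_trans hρ0 hx.1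
    have step1 : ∫⁻ σ in Ioc ρ (2*ρ), ENNReal.ofReal (σ ^ (-γ) * h σ / σ) ≤ I :=
      lintegral_mono_set hsub
    have step2 : ∫⁻ σ in Ioc ρ (2*ρ), ENNReal.ofReal (h ρ * σ ^ (-γ-1))
        ≤ ∫⁻ σ in Ioc ρ (2*ρ), ENNReal.ofReal (σ ^ (-γ) * h σ / σ) := by
      apply lintegral_mono_ae
      filter_upwards [ae_restrict_mem measurableSet_Ioc] with σ hσ
      have hσ0 : 0 < σ := lt_trans hρ0 hσ.1
      apply ENNReal.ofReal_le_ofReal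
      have hhh : h ρ ≤ h σ := hmono hρ (hsub hσ) hσ.1.le
      have hrw : σ ^ (-γ-1) = σ ^ (-γ) / σ := by
        rw [Real.rpow_sub hσ0, Real.rpow_one]
      rw [hrw]
      have hrp : (0:ℝ) ≤ σ ^ (-γ) := (Real.rpow_pos_of_pos hσ0 _).le
      rw [show h ρ * (σ ^ (-γ) / σ) = σ ^ (-γ) * h ρ / σ by ring]
      gcongr
    -- compute the lower integral
    have hII : IntervalIntegrable (fun σ : ℝ => σ ^ (-γ-1)) volume ρ (2*ρ) := by
      apply intervalIntegral.intervalIntegrable_rpow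
      right
      rw [uIcc_of_le (by linarith)]
      intro h0
      exact absurd h0.1 (by linarith)
    have hint : IntegrableOn (fun σ : ℝ => h ρ * σ ^ (-γ-1)) (Ioc ρ (2*ρ)) := by
      have := (intervalIntegrable_iff_integrableOn_Ioc_of_le (by linarith : ρ ≤ 2*ρ)).mp hII
      exact this.const_mul _
    have hnn : 0 ≤ᵐ[volume.restrict (Ioc ρ (2*ρ))] fun σ : ℝ => h ρ * σ ^ (-γ-1) := by
      filter_upwards [ae_restrict_mem measurableSet_Ioc] with σ hσ
      exact mul_nonneg (hpos ρ hρ) (Real.rpow_nonneg (by linarith [hσ.1] : (0:ℝ) ≤ σ) _)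
    have hval : ∫ σ in Ioc ρ (2*ρ), h ρ * σ ^ (-γ-1)
        = h ρ * ((ρ ^ (-γ) - (2*ρ) ^ (-γ)) / γ) := by
      rw [← intervalIntegral.integral_of_le (by linarith : ρ ≤ 2*ρ),
        intervalIntegral.integral_const_mul, integral_rpow]
      · rw [show -γ - 1 + 1 = -γ by ring, div_neg, ← neg_div, neg_sub]
      · right
        constructor
        · intro hc; apply absurd (by linarith : γ = 0) hγ.ne'
        · rw [uIcc_of_le (by linarith)]
          intro h0
          exact absurd h0.1 (by linarith)
    have step3 : ENNReal.ofReal (h ρ * ((ρ ^ (-γ) - (2*ρ) ^ (-γ)) / γ))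
        = ∫⁻ σ in Ioc ρ (2*ρ), ENNReal.ofReal (h ρ * σ ^ (-γ-1)) := by
      rw [← hval]
      exact MeasureTheory.ofReal_integral_eq_lintegral_ofReal hint hnn
    -- algebra: ρ^(-γ) * h ρ = C * (h ρ * ((ρ^(-γ) - (2ρ)^(-γ))/γ))
    have h2rho : (2*ρ) ^ (-γ) = 2 ^ (-γ) * ρ ^ (-γ) :=
      Real.mul_rpow (by norm_num) hρ0.le
    have halg : ρ ^ (-γ) * h ρ = C * (h ρ * ((ρ ^ (-γ) - (2*ρ) ^ (-γ)) / γ)) := by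
      rw [h2rho, hCdef, hDdef]
      have hD' : (1:ℝ) - 2 ^ (-γ) ≠ 0 := hD.ne'
      field_simp
    calc ENNReal.ofReal (ρ ^ (-γ) * h ρ)
        = ENNReal.ofReal C * ENNReal.ofReal (h ρ * ((ρ ^ (-γ) - (2*ρ) ^ (-γ)) / γ)) := by
          rw [← ENNReal.ofReal_mul hC0, ← halg]
      _ ≤ ENNReal.ofReal C * I := by
          rw [step3]; gcongr; exact le_trans step2 step1
  have hτ0 : (0:ℝ) < τ := by linarith
  have hτ1 : (0:ℝ) ≤ τ - 1 := by linarith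
  -- case I = 0
  rcases eq_or_ne I 0 with hI0 | hI0
  · have hz : ∀ ρ ∈ Ioi (0:ℝ), ENNReal.ofReal ((ρ ^ (-γ) * h ρ) ^ τ / ρ) = 0 := by
      intro ρ hρ
      have hρ0 : (0:ℝ) < ρ := hρ
      have hk := key ρ hρ
      rw [hI0, mul_zero] at hk
      have hle : ρ ^ (-γ) * h ρ ≤ 0 := ENNReal.ofReal_eq_zero.mp (le_antisymm hk zero_le)
      have heq : ρ ^ (-γ) * h ρ = 0 :=
        le_antisymm hle (mul_nonneg (Real.rpow_nonneg hρ0.le _) (hpos ρ hρ))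
      rw [heq, Real.zero_rpow hτ0.ne', zero_div, ENNReal.ofReal_zero]
    have : ∫⁻ ρ in Ioi (0:ℝ), ENNReal.ofReal ((ρ ^ (-γ) * h ρ) ^ τ / ρ) = 0 := by
      rw [← lintegral_zero (μ := volume.restrict (Ioi (0:ℝ)))]
      apply lintegral_congr_ae
      filter_upwards [ae_restrict_mem measurableSet_Ioi] with ρ hρ
      exact hz ρ hρ
    rw [this]; exact zero_le
  -- case I = ⊤
  rcases eq_or_ne I ⊤ with hItop | hItop
  · rw [hItop, ENNReal.top_rpow_of_pos hτ0, ENNReal.mul_top]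
    · exact le_top
    · exact (ENNReal.ofReal_pos.mpr (Real.rpow_pos_of_pos two_pos _)).ne'
  -- main case
  have hfin : ENNReal.ofReal C * I ≠ ⊤ := ENNReal.mul_ne_top ENNReal.ofReal_ne_top hItop
  have key2 : ∀ ρ ∈ Ioi (0:ℝ), ENNReal.ofReal ((ρ ^ (-γ) * h ρ) ^ τ / ρ)
      ≤ (ENNReal.ofReal C * I) ^ (τ-1) * ENNReal.ofReal (ρ ^ (-γ) * h ρ / ρ) := by
    intro ρ hρ
    have hρ0 : (0:ℝ) < ρ := hρ
    set a : ℝ := ρ ^ (-γ) * h ρ with hadef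
    have ha : 0 ≤ a := mul_nonneg (Real.rpow_nonneg hρ0.le _) (hpos ρ hρ)
    rcases eq_or_lt_of_le ha with ha0 | ha0
    · rw [← ha0, Real.zero_rpow hτ0.ne', zero_div, ENNReal.ofReal_zero]
      exact zero_le
    · have hsplit : a ^ τ / ρ = a ^ (τ-1) * (a / ρ) := by
        rw [show τ = (τ-1) + 1 by ring, Real.rpow_add_one ha0.ne']
        ring
      rw [hsplit, ENNReal.ofReal_mul (Real.rpow_nonneg ha _),
        ← ENNReal.ofReal_rpow_of_nonneg ha hτ1]
      gcongr
      exact key ρ hρ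
  calc ∫⁻ ρ in Ioi (0:ℝ), ENNReal.ofReal ((ρ ^ (-γ) * h ρ) ^ τ / ρ)
      ≤ ∫⁻ ρ in Ioi (0:ℝ), (ENNReal.ofReal C * I) ^ (τ-1) * ENNReal.ofReal (ρ ^ (-γ) * h ρ / ρ) := by
        apply lintegral_mono_ae
        filter_upwards [ae_restrict_mem measurableSet_Ioi] with ρ hρ
        exact key2 ρ hρ
    _ = (ENNReal.ofReal C * I) ^ (τ-1) * I := by
        rw [lintegral_const_mul' _ _ (ENNReal.rpow_ne_top_of_nonneg hτ1 hfin)]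
    _ = ENNReal.ofReal C ^ (τ-1) * I ^ τ := by
        rw [ENNReal.mul_rpow_of_nonneg _ _ hτ1, mul_assoc,
          show I ^ (τ-1) * I = I ^ (τ-1) * I ^ (1:ℝ) by rw [ENNReal.rpow_one],
          ← ENNReal.rpow_add _ _ hI0 hItop, show τ - 1 + 1 = τ by ring]
    _ ≤ ENNReal.ofReal C ^ τ * I ^ τ := by
        gcongr
        · exact ENNReal.one_le_ofReal.mpr hC1
        · linarith
    _ ≤ ENNReal.ofReal (2 ^ ((2*γ+1)*τ)) * I ^ τ := by
        gcongr ?_ * _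
        rw [ENNReal.ofReal_rpow_of_nonneg hC0 hτ0.le]
        apply ENNReal.ofReal_le_ofReal
        calc C ^ τ ≤ ((2:ℝ) ^ (2*γ+1)) ^ τ := Real.rpow_le_rpow hC0 hCbound hτ0.le
          _ = 2 ^ ((2*γ+1)*τ) := by rw [← Real.rpow_mul (by norm_num : (0:ℝ) ≤ 2)]
end

section
/- Let $n > k \geq 0$, $p, r > 1$, $\lambda > 0$, and suppose $\beta \geq k - k/r$. Then the weighted HLS inequality fails: there is no constant $C > 0$ such that $\iint_{\mathbb{R}^n \times \mathbb{R}^{n-k}} \frac{f(x) g(y)}{|x-y|^{\lambda} |y''|^{\beta}} dx \, dy \leq C \|f\|_{L^p(\mathbb{R}^{n-k})} \|g\|_{L^r(\mathbb{R}^n)}$ holds for all non-negative $f \in L^p(\mathbb{R}^{n-k})$ and $g \in L^r(\mathbb{R}^n)$. More precisely, for $f = \chi_{B_1^{n-k}}$ the characteristic function of the unit ball in $\mathbb{R}^{n-k}$ and $q = r/(r-1)$, one has $\int_{\mathbb{R}^n} \Big( \int_{\mathbb{R}^{n-k}} \frac{f(x)}{|x-y|^{\lambda} |y''|^{\beta}}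 dx \Big)^q dy = +\infty$. -/
open MeasureTheory Set Metric Filter
open scoped ENNReal NNReal

noncomputable section HLSAux

abbrev Ed (d : ℕ) := EuclideanSpace ℝ (Fin d)

def rr (j : ℕ) : ℝ := (2⁻¹ : ℝ) ^ (j + 1)

lemma rr_pos (j : ℕ) : 0 < rr j := by unfold rr; positivity

lemma rr_le_one (j : ℕ) : rr j ≤ 1 := by
  unfold rr; exact pow_le_one₀ (by norm_num) (by norm_num)

lemma rr_anti {i j : ℕ} (h : i ≤ j) : rr j ≤ rr i :=
  pow_le_pow_of_le_one (by norm_num) (by norm_num) (by omega)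

lemma rr_succ (j : ℕ) : rr (j + 1) = rr j * 2⁻¹ := by
  unfold rr; ring

def Ann (d j : ℕ) : Set (Ed d) := ball (0 : Ed d) (rr j) \ ball 0 (rr (j + 1))

lemma measurableSet_Ann (d j : ℕ) : MeasurableSet (Ann d j) :=
  measurableSet_ball.diff measurableSet_ball

lemma mem_Ann_iff {d j : ℕ} {z : Ed d} : z ∈ Ann d j ↔ ‖z‖ < rr j ∧ rr (j + 1) ≤ ‖z‖ := by
  simp [Ann, mem_ball_zero_iff, not_lt]

lemma Ann_disjoint (d : ℕ) : Pairwise (Function.onFun Disjoint (Ann d)) := by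
  intro i j hij
  wlog h : i < j generalizing i j
  · exact (this hij.symm (by omega)).symm
  refine Set.disjoint_left.mpr fun z hzi hzj => ?_
  have h1 := (mem_Ann_iff.mp hzi).2
  have h2 := (mem_Ann_iff.mp hzj).1
  have h3 := rr_anti (show i + 1 ≤ j by omega)
  linarith

lemma nontrivial_Ed {d : ℕ} (hd : 1 ≤ d) : Nontrivial (Ed d) :=
  Module.nontrivial_of_finrank_pos (R := ℝ) (by rw [finrank_euclideanSpace_fin]; omega)

lemma vol_ball_Ed {d : ℕ} (hd : 1 ≤ d) {ρ : ℝ} (hρ : 0 ≤ ρ) :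
    volume (ball (0 : Ed d) ρ) = ENNReal.ofReal (ρ ^ d) * volume (ball (0 : Ed d) 1) := by
  haveI := nontrivial_Ed hd
  rw [Measure.addHaar_ball volume 0 hρ, finrank_euclideanSpace_fin]

lemma vol_Ann_le {d : ℕ} (hd : 1 ≤ d) (j : ℕ) :
    volume (Ann d j) ≤ ENNReal.ofReal (rr j ^ d) * volume (ball (0 : Ed d) 1) :=
  (measure_mono diff_subset).trans_eq (vol_ball_Ed hd (rr_pos j).le)

lemma vol_Ann_ge {d : ℕ} (hd : 1 ≤ d) (j : ℕ) :
    ENNReal.ofReal (rr j ^ d * 2⁻¹) * volume (ball (0 : Ed d) 1) ≤ volume (Ann d j) := by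
  rw [Ann, measure_diff (ball_subset_ball (rr_anti (by omega)))
    measurableSet_ball.nullMeasurableSet measure_ball_lt_top.ne,
    vol_ball_Ed hd (rr_pos j).le, vol_ball_Ed hd (rr_pos (j + 1)).le,
    ← ENNReal.sub_mul (fun _ _ => measure_ball_lt_top.ne),
    ← ENNReal.ofReal_sub _ (pow_nonneg (rr_pos _).le _)]
  refine mul_le_mul_left (ENNReal.ofReal_le_ofReal ?_) _
  have h2 : (2⁻¹ : ℝ) ^ d ≤ 2⁻¹ := by
    calc (2⁻¹ : ℝ) ^ d ≤ (2⁻¹ : ℝ) ^ 1 := pow_le_pow_of_le_one (by norm_num) (by norm_num) hd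
    _ = 2⁻¹ := pow_one _
  have h1 : rr (j + 1) ^ d ≤ rr j ^ d * 2⁻¹ := by
    rw [rr_succ, mul_pow]
    nlinarith [pow_nonneg (rr_pos j).le d]
  linarith

lemma kernel_lower {lam β : ℝ} (hlam : 0 < lam) (hβ : 0 < β) {d1 d2 : ℕ}
    {x y1 : Ed d1} {z : Ed d2} (hx : x ∈ ball (0 : Ed d1) 1) (hy1 : y1 ∈ ball (0 : Ed d1) 1)
    (hz : ‖z‖ ≤ 1) :
    (5 : ℝ) ^ (-(lam / 2)) * ‖z‖ ^ (-β) ≤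
      1 / ((dist x y1 ^ 2 + ‖z‖ ^ 2) ^ (lam / 2) * ‖z‖ ^ β) := by
  rcases eq_or_lt_of_le (norm_nonneg z) with h0 | h0
  · rw [← h0, Real.zero_rpow (by linarith : -β ≠ 0), mul_zero]
    positivity
  · have hdist : dist x y1 ≤ 2 := by
      have h1 := dist_triangle x 0 y1
      rw [mem_ball, dist_comm] at hy1
      rw [mem_ball] at hx
      linarith [hx, hy1]
    have hB0 : (0 : ℝ) < dist x y1 ^ 2 + ‖z‖ ^ 2 := by positivity
    have hB5 : dist x y1 ^ 2 + ‖z‖ ^ 2 ≤ 5 := by nlinarith [dist_nonneg (x := x) (y := y1)]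
    have h1 : (dist x y1 ^ 2 + ‖z‖ ^ 2) ^ (lam / 2) ≤ (5 : ℝ) ^ (lam / 2) :=
      Real.rpow_le_rpow hB0.le hB5 (by linarith)
    have hzb : (0 : ℝ) < ‖z‖ ^ β := Real.rpow_pos_of_pos h0 β
    have hDpos : 0 < (dist x y1 ^ 2 + ‖z‖ ^ 2) ^ (lam / 2) * ‖z‖ ^ β := by
      have := Real.rpow_pos_of_pos hB0 (lam / 2); positivity
    calc (5 : ℝ) ^ (-(lam / 2)) * ‖z‖ ^ (-β)
        = 1 / ((5 : ℝ) ^ (lam / 2) * ‖z‖ ^ β) := by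
          rw [Real.rpow_neg (by norm_num), Real.rpow_neg (norm_nonneg z), one_div, mul_inv]
      _ ≤ 1 / ((dist x y1 ^ 2 + ‖z‖ ^ 2) ^ (lam / 2) * ‖z‖ ^ β) :=
          one_div_le_one_div_of_le hDpos (mul_le_mul_of_nonneg_right h1 hzb.le)

lemma rpow_neg_cancel {ρ : ℝ} (hρ : 0 < ρ) (k : ℕ) : ρ ^ (-(k : ℝ)) * ρ ^ k = 1 := by
  rw [← Real.rpow_natCast ρ k, ← Real.rpow_add hρ]
  simp

lemma lintegral_ge_tsum {d1 d2 : ℕ} (G : Ed d1 × Ed d2 → ℝ≥0∞) :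
    ∑' j : ℕ, ∫⁻ y in (ball (0 : Ed d1) 1) ×ˢ Ann d2 j, G y ≤ ∫⁻ y, G y := by
  have hd : Pairwise (Function.onFun Disjoint fun j => (ball (0 : Ed d1) 1) ×ˢ Ann d2 j) := by
    intro i j hij
    refine Set.disjoint_left.mpr fun y hy1 hy2 => ?_
    exact Set.disjoint_left.mp (Ann_disjoint d2 hij) hy1.2 hy2.2
  calc ∑' j : ℕ, ∫⁻ y in (ball (0 : Ed d1) 1) ×ˢ Ann d2 j, G y
      = ∫⁻ y in ⋃ j, (ball (0 : Ed d1) 1) ×ˢ Ann d2 j, G y :=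
        (lintegral_iUnion (fun j => measurableSet_ball.prod (measurableSet_Ann d2 j)) hd G).symm
    _ ≤ ∫⁻ y, G y := setLIntegral_le_lintegral _ _

lemma setLIntegral_ge_const {α : Type*} [MeasurableSpace α] {μ : Measure α} {S : Set α}
    (hS : MeasurableSet S) {G : α → ℝ≥0∞} {c : ℝ≥0∞} (h : ∀ y ∈ S, c ≤ G y) :
    c * μ S ≤ ∫⁻ y in S, G y ∂μ := by
  rw [← setLIntegral_const S c]
  exact setLIntegral_mono' hS h

lemma vol_prod_set {d1 d2 : ℕ} (s : Set (Ed d1)) (t : Set (Ed d2)) (hs : MeasurableSet s)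
    (ht : MeasurableSet t) : volume (s ×ˢ t) = volume s * volume t := by
  rw [Measure.volume_eq_prod, Measure.prod_prod]


set_option maxHeartbeats 2000000 in
theorem stmt_8 (n k : ℕ) (hk : 1 ≤ k) (hkn : k < n) (p r lam β q : ℝ)
    (hp : 1 < p) (hr : 1 < r) (hlam : 0 < lam)
    (hβ : (k : ℝ) - k / r ≤ β) (hq : q = r / (r - 1)) :
    (∫⁻ y : EuclideanSpace ℝ (Fin (n - k)) × EuclideanSpace ℝ (Fin k),
        (∫⁻ x in Metric.ball (0 : EuclideanSpace ℝ (Fin (n - k))) 1,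
          ENNReal.ofReal
            (1 / ((dist x y.1 ^ 2 + ‖y.2‖ ^ 2) ^ (lam / 2) * ‖y.2‖ ^ β))) ^ q) = ⊤ ∧
      ¬ ∃ C : ℝ, 0 < C ∧
        ∀ (f : EuclideanSpace ℝ (Fin (n - k)) → ℝ)
          (g : EuclideanSpace ℝ (Fin (n - k)) × EuclideanSpace ℝ (Fin k) → ℝ),
          Measurable f → Measurable g → (∀ x, 0 ≤ f x) → (∀ y, 0 ≤ g y) →
          ∫⁻ y : EuclideanSpace ℝ (Fin (n - k)) × EuclideanSpace ℝ (Fin k),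
              ∫⁻ x, ENNReal.ofReal
                (f x * g y / ((dist x y.1 ^ 2 + ‖y.2‖ ^ 2) ^ (lam / 2) * ‖y.2‖ ^ β))
            ≤ ENNReal.ofReal C * eLpNorm f (ENNReal.ofReal p) volume *
                eLpNorm g (ENNReal.ofReal r) volume := by
  have hr0 : (0:ℝ) < r := by linarith
  have hr1 : (0:ℝ) < r - 1 := by linarith
  have hq0 : 0 < q := by rw [hq]; positivity
  have hk0 : (0:ℝ) < (k:ℝ) := by exact_mod_cast hk
  have hβpos : 0 < β := by
    have h2 : (k:ℝ)/r < k := by rw [div_lt_iff₀ hr0]; nlinarith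
    linarith
  have hβq : (k : ℝ) ≤ β * q := by
    have he : ((k:ℝ) - k / r) * (r / (r - 1)) = k := by field_simp
    calc (k:ℝ) = ((k:ℝ) - k/r) * (r/(r-1)) := he.symm
      _ ≤ β * (r/(r-1)) := mul_le_mul_of_nonneg_right hβ (by positivity)
      _ = β * q := by rw [hq]
  have hd1 : 1 ≤ n - k := by omega
  set V1 := volume (ball (0 : Ed (n-k)) 1) with hV1
  set V2 := volume (ball (0 : Ed k) 1) with hV2
  have hV1pos : 0 < V1 := measure_ball_pos _ _ one_pos
  have hV1top : V1 ≠ ⊤ := measure_ball_lt_top.ne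
  have hV2pos : 0 < V2 := measure_ball_pos _ _ one_pos
  have hV2top : V2 ≠ ⊤ := measure_ball_lt_top.ne
  set cl : ℝ := (5:ℝ) ^ (-(lam/2)) with hcl
  have hclpos : 0 < cl := Real.rpow_pos_of_pos (by norm_num) _
  constructor
  · -- Part 1
    refine eq_top_iff.mpr ?_
    set c8 := ENNReal.ofReal (cl ^ q * 2⁻¹) * (V1 ^ q * (V1 * V2)) with hc8
    have hc80 : c8 ≠ 0 := by
      have h1 : (0:ℝ≥0∞) < V1 ^ q := ENNReal.rpow_pos hV1pos hV1top
      exact mul_ne_zero (ENNReal.ofReal_pos.mpr (by positivity)).ne'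
        (mul_ne_zero h1.ne' (mul_ne_zero hV1pos.ne' hV2pos.ne'))
    have per_j : ∀ j : ℕ, c8 ≤ ∫⁻ y in (ball (0 : Ed (n-k)) 1) ×ˢ Ann k j,
        (∫⁻ x in ball (0 : Ed (n-k)) 1, ENNReal.ofReal
          (1 / ((dist x y.1 ^ 2 + ‖y.2‖ ^ 2) ^ (lam / 2) * ‖y.2‖ ^ β))) ^ q := by
      intro j
      have hρpos := rr_pos j
      have hρ1 := rr_le_one j
      have hSmeas : MeasurableSet ((ball (0 : Ed (n-k)) 1) ×ˢ Ann k j) :=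
        measurableSet_ball.prod (measurableSet_Ann k j)
      have hinner : ∀ y : Ed (n-k) × Ed k, y ∈ (ball (0 : Ed (n-k)) 1) ×ˢ Ann k j →
          ENNReal.ofReal (cl * rr j ^ (-β)) * V1 ≤
            ∫⁻ x in ball (0 : Ed (n-k)) 1, ENNReal.ofReal
              (1 / ((dist x y.1 ^ 2 + ‖y.2‖ ^ 2) ^ (lam / 2) * ‖y.2‖ ^ β)) := by
        intro y hy
        have hy1 : y.1 ∈ ball (0 : Ed (n-k)) 1 := hy.1
        have hy2 := mem_Ann_iff.mp hy.2
        have hz0 : 0 < ‖y.2‖ := lt_of_lt_of_le (rr_pos (j+1)) hy2.2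
        calc ENNReal.ofReal (cl * rr j ^ (-β)) * V1
            = ∫⁻ _ in ball (0 : Ed (n-k)) 1, ENNReal.ofReal (cl * rr j ^ (-β)) :=
              (setLIntegral_const _ _).symm
          _ ≤ _ := by
              apply setLIntegral_mono' measurableSet_ball
              intro x hx
              apply ENNReal.ofReal_le_ofReal
              have h1 : rr j ^ (-β) ≤ ‖y.2‖ ^ (-β) := by
                rw [Real.rpow_neg hρpos.le, Real.rpow_neg (norm_nonneg _), ← one_div, ← one_div]
                exact one_div_le_one_div_of_le (Real.rpow_pos_of_pos hz0 β)
                  (Real.rpow_le_rpow (norm_nonneg _) hy2.1.le hβpos.le)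
              calc cl * rr j ^ (-β) ≤ cl * ‖y.2‖ ^ (-β) :=
                    mul_le_mul_of_nonneg_left h1 hclpos.le
                _ ≤ _ := kernel_lower hlam hβpos hx hy1 (le_trans hy2.1.le hρ1)
      have key : ENNReal.ofReal (cl ^ q * 2⁻¹) ≤
          ENNReal.ofReal (cl * rr j ^ (-β)) ^ q * ENNReal.ofReal (rr j ^ k * 2⁻¹) := by
        rw [ENNReal.ofReal_rpow_of_pos (by positivity), ← ENNReal.ofReal_mul (by positivity)]
        apply ENNReal.ofReal_le_ofReal
        have hmulpow : (cl * rr j ^ (-β)) ^ q = cl ^ q * (rr j ^ (-β)) ^ q :=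
          Real.mul_rpow hclpos.le (Real.rpow_nonneg hρpos.le _)
        have hρq : (rr j ^ (-β)) ^ q = rr j ^ (-(β*q)) := by
          rw [← Real.rpow_mul hρpos.le]; ring_nf
        have h1 : (1:ℝ) ≤ rr j ^ (-(β*q)) * rr j ^ k := by
          rw [← Real.rpow_natCast (rr j) k, ← Real.rpow_add hρpos]
          exact Real.one_le_rpow_of_pos_of_le_one_of_nonpos hρpos hρ1 (by linarith)
        rw [hmulpow, hρq]
        nlinarith [mul_nonneg (Real.rpow_nonneg hclpos.le q) (sub_nonneg.mpr h1),
          Real.rpow_nonneg hclpos.le q]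
      calc c8 ≤ (ENNReal.ofReal (cl * rr j ^ (-β)) ^ q * ENNReal.ofReal (rr j ^ k * 2⁻¹)) *
            (V1 ^ q * (V1 * V2)) := by rw [hc8]; exact mul_le_mul_left key _
        _ = (ENNReal.ofReal (cl * rr j ^ (-β)) * V1) ^ q *
            (V1 * (ENNReal.ofReal (rr j ^ k * 2⁻¹) * V2)) := by
            rw [ENNReal.mul_rpow_of_nonneg _ _ hq0.le]; ring
        _ ≤ (ENNReal.ofReal (cl * rr j ^ (-β)) * V1) ^ q *
            volume ((ball (0 : Ed (n-k)) 1) ×ˢ Ann k j) := by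
            apply mul_le_mul_right
            rw [vol_prod_set _ _ measurableSet_ball (measurableSet_Ann k j)]
            exact mul_le_mul_right (vol_Ann_ge hk j) _
        _ ≤ _ := setLIntegral_ge_const hSmeas
            (fun y hy => ENNReal.rpow_le_rpow (hinner y hy) hq0.le)
    calc (⊤:ℝ≥0∞) = ∑' _ : ℕ, c8 := (ENNReal.tsum_const_eq_top_of_ne_zero hc80).symm
      _ ≤ ∑' j : ℕ, ∫⁻ y in (ball (0 : Ed (n-k)) 1) ×ˢ Ann k j,
          (∫⁻ x in ball (0 : Ed (n-k)) 1, ENNReal.ofReal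
            (1 / ((dist x y.1 ^ 2 + ‖y.2‖ ^ 2) ^ (lam / 2) * ‖y.2‖ ^ β))) ^ q :=
          ENNReal.tsum_le_tsum per_j
      _ ≤ _ := lintegral_ge_tsum _
  · -- Part 2
    rintro ⟨C, hC, H⟩
    set f : Ed (n-k) → ℝ := (ball (0 : Ed (n-k)) 1).indicator (fun _ => (1:ℝ)) with hf
    have hfm : Measurable f := measurable_const.indicator measurableSet_ball
    have hf0 : ∀ x, 0 ≤ f x := fun x => Set.indicator_nonneg (fun _ _ => zero_le_one) x
    set sh : ℕ → Set (Ed k) := fun m => ball (0 : Ed k) 2⁻¹ \ ball 0 (rr (m+1)) with hsh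
    have hshm : ∀ m, MeasurableSet (sh m) := fun m => measurableSet_ball.diff measurableSet_ball
    have mem_sh : ∀ m (z : Ed k), z ∈ sh m ↔ ‖z‖ < 2⁻¹ ∧ rr (m+1) ≤ ‖z‖ := by
      intro m z; simp [hsh, mem_ball_zero_iff, not_lt]
    have rr_zero : rr 0 = 2⁻¹ := by unfold rr; norm_num
    have Ann_sub_sh : ∀ {j m : ℕ}, j < m → Ann k j ⊆ sh m := by
      intro j m hjm z hz
      have h := mem_Ann_iff.mp hz
      rw [mem_sh]
      refine ⟨?_, le_trans (rr_anti (by omega : j+1 ≤ m+1)) h.2⟩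
      calc ‖z‖ < rr j := h.1
        _ ≤ rr 0 := rr_anti (Nat.zero_le j)
        _ = 2⁻¹ := rr_zero
    have Ann_disj_sh : ∀ {j m : ℕ}, m + 1 ≤ j → Ann k j ∩ sh m = ∅ := by
      intro j m hjm
      ext z
      simp only [mem_inter_iff, mem_empty_iff_false, iff_false, not_and]
      intro hz hzs
      have h1 := (mem_Ann_iff.mp hz).1
      have h2 := ((mem_sh m z).mp hzs).2
      have h3 := rr_anti hjm
      linarith
    set Sg : ℕ → Set (Ed (n-k) × Ed k) := fun m => (ball (0 : Ed (n-k)) 1) ×ˢ sh m with hSg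
    have hSgm : ∀ m, MeasurableSet (Sg m) := fun m => measurableSet_ball.prod (hshm m)
    set g : ℕ → (Ed (n-k) × Ed k) → ℝ :=
      fun m => (Sg m).indicator (fun y => ‖y.2‖ ^ (β - k)) with hg
    have hgm : ∀ m, Measurable (g m) := fun m =>
      (measurable_snd.norm.pow measurable_const).indicator (hSgm m)
    have hg0 : ∀ m y, 0 ≤ g m y := fun m y =>
      Set.indicator_nonneg (fun y _ => Real.rpow_nonneg (norm_nonneg _) _) y
    set c0 := ENNReal.ofReal (cl * 2⁻¹) * (V1 * (V1 * V2)) with hc0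
    set c4 := ENNReal.ofReal ((2:ℝ) ^ k) * (V1 * V2) with hc4
    have hc00 : c0 ≠ 0 := mul_ne_zero (ENNReal.ofReal_pos.mpr (by positivity)).ne'
      (mul_ne_zero hV1pos.ne' (mul_ne_zero hV1pos.ne' hV2pos.ne'))
    have hc0top : c0 ≠ ⊤ := ENNReal.mul_ne_top ENNReal.ofReal_ne_top
      (ENNReal.mul_ne_top hV1top (ENNReal.mul_ne_top hV1top hV2top))
    have hc4top : c4 ≠ ⊤ := ENNReal.mul_ne_top ENNReal.ofReal_ne_top
      (ENNReal.mul_ne_top hV1top hV2top)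
    -- lower bound for the double integral
    have LHS_lower : ∀ m : ℕ, (m : ℝ≥0∞) * c0 ≤
        ∫⁻ y : Ed (n-k) × Ed k, ∫⁻ x, ENNReal.ofReal
          (f x * g m y / ((dist x y.1 ^ 2 + ‖y.2‖ ^ 2) ^ (lam / 2) * ‖y.2‖ ^ β)) := by
      intro m
      have per_j : ∀ j : ℕ, j < m → c0 ≤
          ∫⁻ y in (ball (0 : Ed (n-k)) 1) ×ˢ Ann k j, ∫⁻ x, ENNReal.ofReal
            (f x * g m y / ((dist x y.1 ^ 2 + ‖y.2‖ ^ 2) ^ (lam / 2) * ‖y.2‖ ^ β)) := by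
        intro j hjm
        have hρpos := rr_pos j
        have hρ1 := rr_le_one j
        have hSmeas : MeasurableSet ((ball (0 : Ed (n-k)) 1) ×ˢ Ann k j) :=
          measurableSet_ball.prod (measurableSet_Ann k j)
        have hinner : ∀ y : Ed (n-k) × Ed k, y ∈ (ball (0 : Ed (n-k)) 1) ×ˢ Ann k j →
            ENNReal.ofReal (cl * rr j ^ (-(k:ℝ))) * V1 ≤ ∫⁻ x, ENNReal.ofReal
              (f x * g m y / ((dist x y.1 ^ 2 + ‖y.2‖ ^ 2) ^ (lam / 2) * ‖y.2‖ ^ β)) := by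
          intro y hy
          have hy1 : y.1 ∈ ball (0 : Ed (n-k)) 1 := hy.1
          have hy2 := mem_Ann_iff.mp hy.2
          have hz0 : 0 < ‖y.2‖ := lt_of_lt_of_le (rr_pos (j+1)) hy2.2
          have hysg : y ∈ Sg m := ⟨hy.1, Ann_sub_sh hjm hy.2⟩
          have hgy : g m y = ‖y.2‖ ^ (β - k) := by rw [hg]; exact Set.indicator_of_mem hysg _
          calc ENNReal.ofReal (cl * rr j ^ (-(k:ℝ))) * V1
              = ∫⁻ _ in ball (0 : Ed (n-k)) 1, ENNReal.ofReal (cl * rr j ^ (-(k:ℝ))) :=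
                (setLIntegral_const _ _).symm
            _ ≤ ∫⁻ x in ball (0 : Ed (n-k)) 1, ENNReal.ofReal
                (f x * g m y / ((dist x y.1 ^ 2 + ‖y.2‖ ^ 2) ^ (lam / 2) * ‖y.2‖ ^ β)) := by
                apply setLIntegral_mono' measurableSet_ball
                intro x hx
                apply ENNReal.ofReal_le_ofReal
                have hfx : f x = 1 := by rw [hf]; exact Set.indicator_of_mem hx _
                rw [hfx, hgy, one_mul]
                have h1 : rr j ^ (-(k:ℝ)) ≤ ‖y.2‖ ^ (-(k:ℝ)) := by
                  rw [Real.rpow_neg hρpos.le, Real.rpow_neg (norm_nonneg _), ← one_div, ← one_div]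
                  exact one_div_le_one_div_of_le (Real.rpow_pos_of_pos hz0 _)
                    (Real.rpow_le_rpow (norm_nonneg _) hy2.1.le hk0.le)
                have h2 : ‖y.2‖ ^ (β - k) * ‖y.2‖ ^ (-β) = ‖y.2‖ ^ (-(k:ℝ)) := by
                  rw [← Real.rpow_add hz0]; congr 1; ring
                calc cl * rr j ^ (-(k:ℝ)) ≤ cl * ‖y.2‖ ^ (-(k:ℝ)) :=
                      mul_le_mul_of_nonneg_left h1 hclpos.le
                  _ = ‖y.2‖ ^ (β - k) * (cl * ‖y.2‖ ^ (-β)) := by rw [← h2]; ring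
                  _ ≤ ‖y.2‖ ^ (β - k) *
                      (1 / ((dist x y.1 ^ 2 + ‖y.2‖ ^ 2) ^ (lam / 2) * ‖y.2‖ ^ β)) :=
                      mul_le_mul_of_nonneg_left
                        (kernel_lower hlam hβpos hx hy1 (le_trans hy2.1.le hρ1))
                        (Real.rpow_nonneg (norm_nonneg _) _)
                  _ = ‖y.2‖ ^ (β - k) /
                      ((dist x y.1 ^ 2 + ‖y.2‖ ^ 2) ^ (lam / 2) * ‖y.2‖ ^ β) := by
                      rw [mul_one_div]
            _ ≤ _ := setLIntegral_le_lintegral _ _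
        have hsc : (cl * rr j ^ (-(k:ℝ))) * (rr j ^ k * 2⁻¹) = cl * 2⁻¹ := by
          rw [show (cl * rr j ^ (-(k:ℝ))) * (rr j ^ k * 2⁻¹)
              = cl * 2⁻¹ * (rr j ^ (-(k:ℝ)) * rr j ^ k) by ring,
            rpow_neg_cancel hρpos k, mul_one]
        calc c0 ≤ (ENNReal.ofReal (cl * rr j ^ (-(k:ℝ))) * V1) *
              (V1 * (ENNReal.ofReal (rr j ^ k * 2⁻¹) * V2)) := by
              rw [show (ENNReal.ofReal (cl * rr j ^ (-(k:ℝ))) * V1) *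
                  (V1 * (ENNReal.ofReal (rr j ^ k * 2⁻¹) * V2)) =
                  (ENNReal.ofReal (cl * rr j ^ (-(k:ℝ))) * ENNReal.ofReal (rr j ^ k * 2⁻¹)) *
                  (V1 * (V1 * V2)) from by ring,
                ← ENNReal.ofReal_mul (by positivity), hsc, hc0]
          _ ≤ (ENNReal.ofReal (cl * rr j ^ (-(k:ℝ))) * V1) *
              volume ((ball (0 : Ed (n-k)) 1) ×ˢ Ann k j) := by
              apply mul_le_mul_right
              rw [vol_prod_set _ _ measurableSet_ball (measurableSet_Ann k j)]
              exact mul_le_mul_right (vol_Ann_ge hk j) _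
          _ ≤ _ := setLIntegral_ge_const hSmeas hinner
      calc (m : ℝ≥0∞) * c0 = ∑ _j ∈ Finset.range m, c0 := by
            rw [Finset.sum_const, Finset.card_range, nsmul_eq_mul]
        _ ≤ ∑ j ∈ Finset.range m, ∫⁻ y in (ball (0 : Ed (n-k)) 1) ×ˢ Ann k j,
            ∫⁻ x, ENNReal.ofReal
              (f x * g m y / ((dist x y.1 ^ 2 + ‖y.2‖ ^ 2) ^ (lam / 2) * ‖y.2‖ ^ β)) :=
            Finset.sum_le_sum (fun j hj => per_j j (Finset.mem_range.mp hj))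
        _ ≤ ∑' j : ℕ, ∫⁻ y in (ball (0 : Ed (n-k)) 1) ×ˢ Ann k j,
            ∫⁻ x, ENNReal.ofReal
              (f x * g m y / ((dist x y.1 ^ 2 + ‖y.2‖ ^ 2) ^ (lam / 2) * ‖y.2‖ ^ β)) :=
            ENNReal.sum_le_tsum _
        _ ≤ _ := lintegral_ge_tsum _
    -- upper bound for ‖g m‖_r
    have hIm : ∀ m : ℕ, (∫⁻ y, (‖g m y‖₊ : ℝ≥0∞) ^ r) ≤ (((m+1:ℕ)) : ℝ≥0∞) * c4 := by
      intro m
      have hptwise : ∀ y : Ed (n-k) × Ed k, (‖g m y‖₊ : ℝ≥0∞) ^ r =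
          (Sg m).indicator (fun y => ENNReal.ofReal (‖y.2‖ ^ ((β - k) * r))) y := by
        intro y
        by_cases hy : y ∈ Sg m
        · have hz0 : 0 < ‖y.2‖ := lt_of_lt_of_le (rr_pos (m+1)) ((mem_sh m y.2).mp hy.2).2
          rw [Set.indicator_of_mem hy, hg]
          dsimp only
          rw [Set.indicator_of_mem hy,
            ← enorm_eq_nnnorm, Real.enorm_eq_ofReal (Real.rpow_nonneg (norm_nonneg _) _),
            ENNReal.ofReal_rpow_of_pos (Real.rpow_pos_of_pos hz0 _),
            ← Real.rpow_mul (norm_nonneg _)]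
        · rw [Set.indicator_of_notMem hy, hg]
          dsimp only
          rw [Set.indicator_of_notMem hy]
          simp only [nnnorm_zero, ENNReal.coe_zero]
          exact ENNReal.zero_rpow_of_pos (by linarith)
      rw [lintegral_congr hptwise, lintegral_indicator (hSgm m)]
      have hcover : Sg m ⊆ ⋃ j : ℕ, ((ball (0 : Ed (n-k)) 1) ×ˢ Ann k j) ∩ Sg m := by
        rintro ⟨y1, z⟩ hy
        have hz := (mem_sh m z).mp hy.2
        have hex : ∃ i, rr i ≤ ‖z‖ := ⟨m+1, hz.2⟩
        have h1 : rr (Nat.find hex) ≤ ‖z‖ := Nat.find_spec hex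
        have hj0 : Nat.find hex ≠ 0 := by
          intro h0
          rw [h0, rr_zero] at h1
          linarith [hz.1]
        refine Set.mem_iUnion.mpr ⟨Nat.find hex - 1, ⟨⟨hy.1, ?_⟩, hy⟩⟩
        rw [mem_Ann_iff]
        constructor
        · by_contra hcon
          push_neg at hcon
          exact Nat.find_min hex (by omega : Nat.find hex - 1 < Nat.find hex) hcon
        · rw [show Nat.find hex - 1 + 1 = Nat.find hex by omega]
          exact h1
      have hterm : ∀ j : ℕ, (∫⁻ y in ((ball (0 : Ed (n-k)) 1) ×ˢ Ann k j) ∩ Sg m,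
          ENNReal.ofReal (‖y.2‖ ^ ((β - k) * r))) ≤ if j < m + 1 then c4 else 0 := by
        intro j
        by_cases hjm : j < m + 1
        · rw [if_pos hjm]
          have hρpos := rr_pos j
          have hρ1pos := rr_pos (j+1)
          have hexp : -(k:ℝ) ≤ (β - k) * r := by
            have h5 : -((k:ℝ)/r) * r = -(k:ℝ) := by field_simp
            nlinarith [mul_le_mul_of_nonneg_right
              (show -((k:ℝ)/r) ≤ β - k by linarith) hr0.le]
          have hpt : ∀ y : Ed (n-k) × Ed k, y ∈ (ball (0 : Ed (n-k)) 1) ×ˢ Ann k j →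
              ENNReal.ofReal (‖y.2‖ ^ ((β - k) * r)) ≤
                ENNReal.ofReal (rr (j+1) ^ (-(k:ℝ))) := by
            intro y hy
            have hy2 := mem_Ann_iff.mp hy.2
            have hz0 : 0 < ‖y.2‖ := lt_of_lt_of_le hρ1pos hy2.2
            apply ENNReal.ofReal_le_ofReal
            calc ‖y.2‖ ^ ((β - k) * r) ≤ ‖y.2‖ ^ (-(k:ℝ)) :=
                  Real.rpow_le_rpow_of_exponent_ge hz0 (le_trans hy2.1.le (rr_le_one j)) hexp
              _ ≤ rr (j+1) ^ (-(k:ℝ)) := by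
                  rw [Real.rpow_neg hz0.le, Real.rpow_neg hρ1pos.le, ← one_div, ← one_div]
                  exact one_div_le_one_div_of_le (Real.rpow_pos_of_pos hρ1pos _)
                    (Real.rpow_le_rpow hρ1pos.le hy2.2 hk0.le)
          have hrj : rr j = rr (j+1) * 2 := by rw [rr_succ]; ring
          have hsc : rr (j+1) ^ (-(k:ℝ)) * rr j ^ k = (2:ℝ) ^ k := by
            rw [hrj, mul_pow, ← mul_assoc, rpow_neg_cancel hρ1pos k, one_mul]
          calc (∫⁻ y in ((ball (0 : Ed (n-k)) 1) ×ˢ Ann k j) ∩ Sg m,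
                ENNReal.ofReal (‖y.2‖ ^ ((β - k) * r)))
              ≤ ∫⁻ y in (ball (0 : Ed (n-k)) 1) ×ˢ Ann k j,
                ENNReal.ofReal (‖y.2‖ ^ ((β - k) * r)) :=
                lintegral_mono_set inter_subset_left
            _ ≤ ∫⁻ _ in (ball (0 : Ed (n-k)) 1) ×ˢ Ann k j,
                ENNReal.ofReal (rr (j+1) ^ (-(k:ℝ))) :=
                setLIntegral_mono' (measurableSet_ball.prod (measurableSet_Ann k j)) hpt
            _ = ENNReal.ofReal (rr (j+1) ^ (-(k:ℝ))) *
                volume ((ball (0 : Ed (n-k)) 1) ×ˢ Ann k j) := setLIntegral_const _ _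
            _ ≤ ENNReal.ofReal (rr (j+1) ^ (-(k:ℝ))) *
                (V1 * (ENNReal.ofReal (rr j ^ k) * V2)) := by
                apply mul_le_mul_right
                rw [vol_prod_set _ _ measurableSet_ball (measurableSet_Ann k j)]
                exact mul_le_mul_right (vol_Ann_le hk j) _
            _ = c4 := by
                rw [show ENNReal.ofReal (rr (j+1) ^ (-(k:ℝ))) *
                    (V1 * (ENNReal.ofReal (rr j ^ k) * V2)) =
                    (ENNReal.ofReal (rr (j+1) ^ (-(k:ℝ))) * ENNReal.ofReal (rr j ^ k)) *
                    (V1 * V2) from by ring,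
                  ← ENNReal.ofReal_mul (Real.rpow_nonneg hρ1pos.le _), hsc, hc4]
        · rw [if_neg hjm]
          have hempty : ((ball (0 : Ed (n-k)) 1) ×ˢ Ann k j) ∩ Sg m = ∅ := by
            rw [hSg]
            dsimp only
            rw [Set.prod_inter_prod, Ann_disj_sh (by omega : m + 1 ≤ j), Set.prod_empty]
          rw [hempty]
          simp
      calc (∫⁻ y in Sg m, ENNReal.ofReal (‖y.2‖ ^ ((β - k) * r)))
          ≤ ∫⁻ y in ⋃ j : ℕ, ((ball (0 : Ed (n-k)) 1) ×ˢ Ann k j) ∩ Sg m,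
            ENNReal.ofReal (‖y.2‖ ^ ((β - k) * r)) := lintegral_mono_set hcover
        _ ≤ ∑' j : ℕ, ∫⁻ y in ((ball (0 : Ed (n-k)) 1) ×ˢ Ann k j) ∩ Sg m,
            ENNReal.ofReal (‖y.2‖ ^ ((β - k) * r)) := lintegral_iUnion_le _ _
        _ ≤ ∑' j : ℕ, if j < m + 1 then c4 else 0 := ENNReal.tsum_le_tsum hterm
        _ = ∑ j ∈ Finset.range (m+1), if j < m + 1 then c4 else 0 :=
            tsum_eq_sum (by intro b hb; rw [if_neg]; simpa using hb)
        _ = (((m+1:ℕ)) : ℝ≥0∞) * c4 := by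
            rw [Finset.sum_congr rfl (fun j hj => if_pos (Finset.mem_range.mp hj)),
              Finset.sum_const, Finset.card_range, nsmul_eq_mul]
    have hNf : eLpNorm f (ENNReal.ofReal p) volume ≠ ⊤ := by
      rw [hf, eLpNorm_indicator_const measurableSet_ball
        (by simp only [ne_eq, ENNReal.ofReal_eq_zero, not_le]; linarith) ENNReal.ofReal_ne_top]
      exact ENNReal.mul_ne_top ENNReal.coe_ne_top
        (ENNReal.rpow_ne_top_of_nonneg (by positivity) hV1top)
    have hNg : ∀ m : ℕ, eLpNorm (g m) (ENNReal.ofReal r) volume ≤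
        ((((m+1:ℕ)) : ℝ≥0∞) * c4) ^ (1/r) := by
      intro m
      rw [eLpNorm_eq_lintegral_rpow_enorm_toReal
        (by simp only [ne_eq, ENNReal.ofReal_eq_zero, not_le]; linarith) ENNReal.ofReal_ne_top,
        ENNReal.toReal_ofReal hr0.le]
      exact ENNReal.rpow_le_rpow (hIm m) (by positivity)
    have hmain : ∀ m : ℕ, (m : ℝ≥0∞) * c0 ≤
        (ENNReal.ofReal C * eLpNorm f (ENNReal.ofReal p) volume * c4 ^ (1/r)) *
          (((m+1:ℕ)) : ℝ≥0∞) ^ (1/r) := by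
      intro m
      calc (m:ℝ≥0∞) * c0 ≤ _ := LHS_lower m
        _ ≤ ENNReal.ofReal C * eLpNorm f (ENNReal.ofReal p) volume *
            eLpNorm (g m) (ENNReal.ofReal r) volume := H f (g m) hfm (hgm m) hf0 (hg0 m)
        _ ≤ ENNReal.ofReal C * eLpNorm f (ENNReal.ofReal p) volume *
            (((((m+1:ℕ)) : ℝ≥0∞)) * c4) ^ (1/r) := mul_le_mul_right (hNg m) _
        _ = _ := by
            rw [ENNReal.mul_rpow_of_nonneg _ _ (by positivity : (0:ℝ) ≤ 1/r)]; ring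
    set K := ENNReal.ofReal C * eLpNorm f (ENNReal.ofReal p) volume * c4 ^ (1/r) with hK
    have hKtop : K ≠ ⊤ := ENNReal.mul_ne_top (ENNReal.mul_ne_top ENNReal.ofReal_ne_top hNf)
      (ENNReal.rpow_ne_top_of_nonneg (by positivity) hc4top)
    have ha0 : 0 < c0.toReal := ENNReal.toReal_pos hc00 hc0top
    set a := c0.toReal with ha
    set b := K.toReal with hb
    have hreal : ∀ m : ℕ, (m:ℝ) * a ≤ b * (((m+1:ℕ)):ℝ) ^ (1/r) := by
      intro m
      have h2 : ((m:ℝ≥0∞) * c0).toReal ≤ (K * (((m+1:ℕ)) : ℝ≥0∞) ^ (1/r)).toReal := by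
        apply ENNReal.toReal_mono ?_ (hmain m)
        exact ENNReal.mul_ne_top hKtop
          (ENNReal.rpow_ne_top_of_nonneg (by positivity) (ENNReal.natCast_ne_top _))
      have e1 : ((m:ℝ≥0∞) * c0).toReal = (m:ℝ) * a := by
        rw [ENNReal.toReal_mul, ENNReal.toReal_natCast]
      have e2 : (K * (((m+1:ℕ)) : ℝ≥0∞) ^ (1/r)).toReal = b * (((m+1:ℕ)):ℝ) ^ (1/r) := by
        rw [ENNReal.toReal_mul, ← ENNReal.toReal_rpow, ENNReal.toReal_natCast]
      rwa [e1, e2] at h2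
    have hb0 : (0:ℝ) ≤ b := ENNReal.toReal_nonneg
    clear H hmain LHS_lower hIm hNg hNf hgm hg0 hf0 hfm mem_sh Ann_sub_sh Ann_disj_sh hshm hSgm
      hg hsh hSg hf hc0 hc4 hK hc00 hc0top hc4top hKtop ha hb
    clear_value f g sh Sg c0 c4 K a b
    have h1r : (0:ℝ) < 1 - 1/r := sub_pos.mpr ((div_lt_one hr0).mpr hr)
    have hT : Filter.Tendsto (fun m : ℕ => (m:ℝ) ^ (1 - 1/r)) Filter.atTop Filter.atTop :=
      (tendsto_rpow_atTop h1r).comp tendsto_natCast_atTop_atTop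
    obtain ⟨m, hm1, hmgt⟩ := ((Filter.eventually_ge_atTop 1).and
      (hT.eventually_gt_atTop (b * 2 ^ (1/r) / a))).exists
    have hm0 : (0:ℝ) < (m:ℝ) := by exact_mod_cast hm1
    have hmono : (((m+1:ℕ)):ℝ) ^ (1/r) ≤ 2 ^ (1/r) * (m:ℝ) ^ (1/r) := by
      rw [← Real.mul_rpow (by norm_num) hm0.le]
      apply Real.rpow_le_rpow (by positivity) ?_ (by positivity)
      have hm1' : (1:ℝ) ≤ (m:ℝ) := by exact_mod_cast hm1
      push_cast
      linarith
    have hsplit : (m:ℝ) ^ (1/r) * (m:ℝ) ^ (1 - 1/r) = (m:ℝ) := by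
      rw [← Real.rpow_add hm0]
      norm_num
    have hfin : (m:ℝ) ^ (1 - 1/r) * a ≤ b * 2 ^ (1/r) := by
      have h3 : (m:ℝ) * a ≤ b * (2 ^ (1/r) * (m:ℝ) ^ (1/r)) :=
        le_trans (hreal m) (mul_le_mul_of_nonneg_left hmono hb0)
      have h4 : (m:ℝ) ^ (1/r) * ((m:ℝ) ^ (1 - 1/r) * a) ≤ (m:ℝ) ^ (1/r) * (b * 2 ^ (1/r)) := by
        calc (m:ℝ) ^ (1/r) * ((m:ℝ) ^ (1 - 1/r) * a) = (m:ℝ) * a := by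
              rw [show (m:ℝ) ^ (1/r) * ((m:ℝ) ^ (1 - 1/r) * a)
                  = ((m:ℝ) ^ (1/r) * (m:ℝ) ^ (1 - 1/r)) * a from by ring, hsplit]
          _ ≤ b * (2 ^ (1/r) * (m:ℝ) ^ (1/r)) := h3
          _ = (m:ℝ) ^ (1/r) * (b * 2 ^ (1/r)) := by ring
      exact le_of_mul_le_mul_left h4 (Real.rpow_pos_of_pos hm0 _)
    rw [div_lt_iff₀ ha0] at hmgt
    linarith
end HLSAux
end
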